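/- Suppose ε ∈ ℤⁿ is real (⟨ε,ε⟩ = 1) and e ∈ A_ε is nonzero with the projector factorization property. Then the projection ℓ_e maps A onto A_{ε^⊥}: for every a ∈ A there exists a' ∈ A_{ε^⊥} such that ℓ_e(a) equals the image of a' under the canonical localization map A → A_e. -/

import Mathlib

theorem stmt5 {n : ℕ} {k A : Type*} [Field k] [CommRing A] [IsDomain A] [Algebra k A]
    (𝒜 : (Fin n → ℤ) → Submodule k A) [GradedAlgebra 𝒜]
    (bil : (Fin n → ℤ) →ₗ[ℤ] (Fin n → ℤ) →ₗ[ℤ] ℤ)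
    (ε : Fin n → ℤ) (hreal : bil ε ε = 1)
    (e : A) (he0 : e ≠ 0) (he : e ∈ 𝒜 ε)
    (hproj : ∀ (α : Fin n → ℤ), 0 < bil ε α → ∀ f ∈ 𝒜 α,
        ∃ f' ∈ 𝒜 (α - bil ε α • ε), f = e ^ (bil ε α).toNat * f')
    (ℓ : A →ₗ[k] Localization.Away e)
    (hℓ : ∀ (α : Fin n → ℤ) (a : A), a ∈ 𝒜 α →
        ℓ a * (algebraMap A (Localization.Away e) e) ^ (bil ε α).toNat
          = algebraMap A (Localization.Away e) a
            * (algebraMap A (Localization.Away e) e) ^ (-(bil ε α)).toNat) :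
    ∀ a : A, ∃ a' ∈ (⨆ γ ∈ {γ : Fin n → ℤ | bil ε γ = 0}, 𝒜 γ),
      ℓ a = algebraMap A (Localization.Away e) a' := by
  set S := (⨆ γ ∈ {γ : Fin n → ℤ | bil ε γ = 0}, 𝒜 γ) with hS
  have hmemS : ∀ (γ : Fin n → ℤ), bil ε γ = 0 → ∀ x ∈ 𝒜 γ, x ∈ S := by
    intro γ hγ x hx
    exact Submodule.mem_iSup_of_mem γ (Submodule.mem_iSup_of_mem hγ hx)
  set φ := algebraMap A (Localization.Away e) with hφ
  have hunit : IsUnit (φ e) := IsLocalization.Away.algebraMap_isUnit e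
  intro a
  induction a using DirectSum.Decomposition.inductionOn 𝒜 with
  | zero => exact ⟨0, Submodule.zero_mem S, by simp⟩
  | homogeneous m =>
    rename_i α
    obtain ⟨m, hm⟩ := m
    rcases le_or_gt (bil ε α) 0 with hd | hd
    · -- d ≤ 0 : a' = a * e ^ (-d).toNat
      set c : ℕ := (-(bil ε α)).toNat with hc
      have hcZ : (c : ℤ) = -(bil ε α) := Int.toNat_of_nonneg (by omega)
      refine ⟨m * e ^ c, ?_, ?_⟩
      · refine hmemS (α + c • ε) ?_ _
          (SetLike.mul_mem_graded hm (SetLike.pow_mem_graded c he))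
        rw [map_add, map_nsmul, hreal, nsmul_eq_mul, mul_one]
        omega
      · have h := hℓ α m hm
        rw [Int.toNat_of_nonpos hd, pow_zero, mul_one] at h
        show ℓ m = _
        rw [h, map_mul, map_pow]
    · -- d > 0 : factor out e ^ d
      obtain ⟨f', hf', hfac⟩ := hproj α hd m hm
      refine ⟨f', ?_, ?_⟩
      · refine hmemS _ ?_ _ hf'
        rw [map_sub, map_zsmul, hreal, smul_eq_mul, mul_one, sub_self]
      · have h := hℓ α m hm
        rw [Int.toNat_of_nonpos (by omega : -(bil ε α) ≤ 0), pow_zero, mul_one] at h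
        have h2 : φ m = φ e ^ (bil ε α).toNat * φ f' := by
          rw [hfac, map_mul, map_pow]
        rw [h2] at h
        show ℓ m = _
        exact (IsUnit.pow _ hunit).mul_left_cancel (by rw [mul_comm] at h; exact h)
  | add x y hx hy =>
    obtain ⟨x', hx', hℓx⟩ := hx
    obtain ⟨y', hy', hℓy⟩ := hy
    exact ⟨x' + y', Submodule.add_mem S hx' hy', by rw [map_add, map_add, hℓx, hℓy]⟩
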